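/- (Schur bound for the 4-dimensional Green function kernel) Let z < 0. The kernel K(x,y,w; x',y',w') = G_z^{(4)}(x−x', y−x', w−y', w−w'), where G_z^{(4)}(X) = ∫₀^∞ (4πt)^{-2} e^{−|X|²/(4t)+zt} dt is the Green function of the Laplacian on ℝ⁴, satisfies sup ∫_{ℝ³} K dx'dy'dw' ≤ 1/(2√(2|z|)); hence the induced integral operator B : L²(ℝ³) → L²(ℝ³) is bounded with ‖B‖ ≤ (2√(2|z|))^{-1}. -/

import Mathlib

open MeasureTheory
open scoped ENNReal NNReal

/-- The kernel built from the 4-dimensional Green function `G_z^{(4)}` at energy `z < 0`: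
`K(x,y,w;x',y',w') = G_z^{(4)}(x−x', y−x', w−y', w−w')`. -/
noncomputable def K4 (z x y w x' y' w' : ℝ) : ℝ :=
  ∫ t in Set.Ioi (0 : ℝ), (4 * Real.pi * t) ^ (-(2 : ℝ)) *
    Real.exp (-(((x - x') ^ 2 + (y - x') ^ 2 + (w - y') ^ 2 + (w - w') ^ 2) / (4 * t)) + z * t)

section SchurAux
open Real Set


lemma my_ofReal_integral_le {α : Type*} [MeasurableSpace α] (μ : Measure α) (f : α → ℝ)
    (hnn : 0 ≤ᵐ[μ] f) :
    ENNReal.ofReal (∫ x, f x ∂μ) ≤ ∫⁻ x, ENNReal.ofReal (f x) ∂μ := by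
  by_cases hf : Integrable f μ
  · rw [ofReal_integral_eq_lintegral_ofReal hf hnn]
  · rw [integral_undef hf]; simp

lemma my_integral_le_of_lintegral {α : Type*} [MeasurableSpace α] {μ : Measure α} {f : α → ℝ}
    {C : ℝ} (hC : 0 ≤ C) (hnn : ∀ x, 0 ≤ f x)
    (h : ∫⁻ x, ENNReal.ofReal (f x) ∂μ ≤ ENNReal.ofReal C) : ∫ x, f x ∂μ ≤ C := by
  by_cases hf : Integrable f μ
  · rw [integral_eq_lintegral_of_nonneg_ae (ae_of_all _ hnn) hf.1]
    exact ENNReal.toReal_le_of_le_ofReal hC h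
  · rw [integral_undef hf]; exact hC

lemma lint_gauss (b a : ℝ) (hb : 0 < b) :
    ∫⁻ u : ℝ, ENNReal.ofReal (Real.exp (-(b * (u - a) ^ 2))) = ENNReal.ofReal (Real.sqrt (π / b)) := by
  have hint : Integrable (fun u : ℝ => Real.exp (-(b * (u - a) ^ 2))) := by
    simpa [neg_mul] using (integrable_exp_neg_mul_sq hb).comp_sub_right a
  rw [← ofReal_integral_eq_lintegral_ofReal hint (ae_of_all _ fun x => (Real.exp_pos _).le)]
  congr 1
  have h2 : ∫ u : ℝ, Real.exp (-(b * (u - a) ^ 2)) = ∫ u : ℝ, Real.exp (-b * u ^ 2) := by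
    rw [← integral_sub_right_eq_self (fun u : ℝ => Real.exp (-b * u ^ 2)) a]
    simp [neg_mul]
  rw [h2, integral_gaussian]

lemma gauss_one (c t : ℝ) (ht : 0 < t) :
    ∫⁻ u : ℝ, ENNReal.ofReal (Real.exp (-((c - u) ^ 2 / (4 * t)))) =
      ENNReal.ofReal (Real.sqrt (4 * π * t)) := by
  have heq : ∀ u : ℝ, -((c - u) ^ 2 / (4 * t)) = -((4 * t)⁻¹ * (u - c) ^ 2) := fun u => by
    field_simp; ring
  simp_rw [heq]
  rw [lint_gauss (4 * t)⁻¹ c (by positivity)]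
  congr 2
  field_simp

lemma gauss_two (a b t : ℝ) (ht : 0 < t) :
    ∫⁻ u : ℝ, ENNReal.ofReal (Real.exp (-(((a - u) ^ 2 + (b - u) ^ 2) / (4 * t)))) ≤
      ENNReal.ofReal (Real.sqrt (2 * π * t)) := by
  have key : ∀ u : ℝ, Real.exp (-(((a - u) ^ 2 + (b - u) ^ 2) / (4 * t))) ≤
      Real.exp (-((2 * t)⁻¹ * (u - (a + b) / 2) ^ 2)) := by
    intro u
    apply Real.exp_le_exp.2
    rw [neg_le_neg_iff]
    have h2 : ((a - u) ^ 2 + (b - u) ^ 2) / (4 * t) - (2 * t)⁻¹ * (u - (a + b) / 2) ^ 2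
        = (a - b) ^ 2 / (8 * t) := by field_simp; ring
    have h3 : (0:ℝ) ≤ (a - b) ^ 2 / (8 * t) := by positivity
    linarith
  calc ∫⁻ u : ℝ, ENNReal.ofReal (Real.exp (-(((a - u) ^ 2 + (b - u) ^ 2) / (4 * t))))
      ≤ ∫⁻ u : ℝ, ENNReal.ofReal (Real.exp (-((2 * t)⁻¹ * (u - (a + b) / 2) ^ 2))) :=
        lintegral_mono fun u => ENNReal.ofReal_le_ofReal (key u)
    _ = ENNReal.ofReal (Real.sqrt (π / (2 * t)⁻¹)) := lint_gauss _ _ (by positivity)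
    _ = ENNReal.ofReal (Real.sqrt (2 * π * t)) := by
        congr 2; field_simp

lemma lint_time (c : ℝ) (hc : 0 < c) :
    ∫⁻ t in Set.Ioi (0:ℝ), ENNReal.ofReal (Real.exp (-(c * t)) / Real.sqrt t) =
      ENNReal.ofReal (Real.sqrt (π / c)) := by
  have hint : IntegrableOn (fun t : ℝ => t ^ ((1:ℝ)/2 - 1) * Real.exp (-(c * t))) (Set.Ioi 0) := by
    have := integrableOn_rpow_mul_exp_neg_mul_rpow (p := 1) (s := (1:ℝ)/2 - 1) (b := c)
      (by norm_num) zero_lt_one hc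
    simpa [Real.rpow_one, neg_mul] using this
  have heq : ∀ t ∈ Set.Ioi (0:ℝ), ENNReal.ofReal (Real.exp (-(c * t)) / Real.sqrt t)
      = ENNReal.ofReal (t ^ ((1:ℝ)/2 - 1) * Real.exp (-(c * t))) := by
    intro t ht
    rw [Set.mem_Ioi] at ht
    congr 1
    rw [show ((1:ℝ)/2 - 1) = -(1/2) by norm_num, Real.rpow_neg ht.le,
      ← Real.sqrt_eq_rpow, div_eq_mul_inv, mul_comm]
  rw [setLIntegral_congr_fun measurableSet_Ioi heq,
    ← ofReal_integral_eq_lintegral_ofReal hint]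
  · rw [integral_rpow_mul_exp_neg_mul_Ioi (by norm_num : (0:ℝ) < 1/2) hc]
    congr 1
    rw [Real.Gamma_one_half_eq, ← Real.sqrt_eq_rpow, ← Real.sqrt_mul (by positivity)]
    congr 1
    field_simp
  · filter_upwards [ae_restrict_mem measurableSet_Ioi] with t ht
    have : (0:ℝ) < t := ht
    positivity

lemma const_eq (z : ℝ) (hz : z < 0) :
    Real.sqrt (2 * π) / (4 * π) * Real.sqrt (π / (-z)) = 1 / (2 * Real.sqrt (2 * |z|)) := by
  have hπ : (0:ℝ) < π := Real.pi_pos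
  have hmz : (0:ℝ) < -z := by linarith
  have habs : |z| = -z := abs_of_neg hz
  have key : Real.sqrt (2 * π) * Real.sqrt (π / (-z)) = π * Real.sqrt (2 / (-z)) := by
    rw [← Real.sqrt_mul (by positivity),
      show 2 * π * (π / (-z)) = π ^ 2 * (2 / (-z)) by field_simp [hz.ne],
      Real.sqrt_mul (by positivity), Real.sqrt_sq hπ.le]
  have h4 : Real.sqrt (2 / (-z)) * Real.sqrt (2 * (-z)) = 2 := by
    rw [← Real.sqrt_mul (by positivity),
      show 2 / (-z) * (2 * (-z)) = 2 ^ 2 by field_simp [hz.ne],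
      Real.sqrt_sq (by norm_num)]
  have hs : (0:ℝ) < Real.sqrt (2 * (-z)) := Real.sqrt_pos.2 (by positivity)
  rw [habs, div_mul_eq_mul_div, key, div_eq_div_iff (by positivity) (by positivity)]
  nlinarith [h4, hπ]

section aux
lemma time_pt (z s : ℝ) (hs : 0 < s) :
    (4 * π * s) ^ (-(2:ℝ)) * Real.exp (z * s) * (4 * π * s * Real.sqrt (2 * π * s)) =
      Real.sqrt (2 * π) / (4 * π) * (Real.exp (-(-z * s)) / Real.sqrt s) := by
  have hπ := Real.pi_pos
  have h1 : (4 * π * s) ^ (-(2:ℝ)) = ((4 * π * s) ^ (2:ℕ))⁻¹ := by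
    rw [Real.rpow_neg (by positivity)]
    norm_num
  have h2 : Real.sqrt (2 * π * s) = Real.sqrt (2 * π) * Real.sqrt s := by
    rw [Real.sqrt_mul (by positivity)]
  have h3 : z * s = -(-z * s) := by ring
  rw [h1, h2, ← h3]
  have hss : (0:ℝ) < Real.sqrt s := Real.sqrt_pos.2 hs
  have h4 : Real.sqrt s ^ 2 = s := Real.sq_sqrt hs.le
  set r := Real.sqrt s with hrdef
  rw [← h4]
  field_simp
end aux

lemma K4meas_aux (z : ℝ) (f1 f2 f3 : ℝ → ℝ)
    (hm1 : Measurable f1) (hm2 : Measurable f2) (hm3 : Measurable f3) :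
    Measurable fun q : (ℝ × ℝ × ℝ) × ℝ => (4 * π * q.2) ^ (-(2:ℝ)) *
      Real.exp (-((f1 q.1.1 + f2 q.1.2.1 + f3 q.1.2.2) / (4 * q.2)) + z * q.2) := by
  have hsum : Measurable fun q : (ℝ × ℝ × ℝ) × ℝ =>
      f1 q.1.1 + f2 q.1.2.1 + f3 q.1.2.2 :=
    ((hm1.comp measurable_fst.fst).add (hm2.comp measurable_fst.snd.fst)).add
      (hm3.comp measurable_fst.snd.snd)
  have harg : Measurable fun q : (ℝ × ℝ × ℝ) × ℝ =>
      -((f1 q.1.1 + f2 q.1.2.1 + f3 q.1.2.2) / (4 * q.2)) + z * q.2 :=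
    ((hsum.div (measurable_snd.const_mul 4)).neg).add (measurable_snd.const_mul z)
  exact ((measurable_snd.const_mul (4 * π)).pow measurable_const).mul
    (Real.measurable_exp.comp harg)

lemma key (z : ℝ) (hz : z < 0) (f1 f2 f3 : ℝ → ℝ)
    (hm1 : Measurable f1) (hm2 : Measurable f2) (hm3 : Measurable f3)
    (b1 b2 b3 : ℝ → ℝ)
    (hb1 : ∀ t : ℝ, 0 < t → (∫⁻ u : ℝ, ENNReal.ofReal (Real.exp (-(f1 u / (4 * t))))) ≤
      ENNReal.ofReal (b1 t))
    (hb2 : ∀ t : ℝ, 0 < t → (∫⁻ u : ℝ, ENNReal.ofReal (Real.exp (-(f2 u / (4 * t))))) ≤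
      ENNReal.ofReal (b2 t))
    (hb3 : ∀ t : ℝ, 0 < t → (∫⁻ u : ℝ, ENNReal.ofReal (Real.exp (-(f3 u / (4 * t))))) ≤
      ENNReal.ofReal (b3 t))
    (hbn : ∀ t : ℝ, 0 < t → 0 ≤ b1 t ∧ 0 ≤ b2 t ∧ 0 ≤ b3 t)
    (hprod : ∀ t : ℝ, 0 < t → b1 t * (b2 t * b3 t) ≤ 4 * π * t * Real.sqrt (2 * π * t)) :
    (∫⁻ p : ℝ × ℝ × ℝ, ENNReal.ofReal (∫ s in Set.Ioi (0:ℝ), (4 * π * s) ^ (-(2:ℝ)) *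
        Real.exp (-((f1 p.1 + f2 p.2.1 + f3 p.2.2) / (4 * s)) + z * s))) ≤
      ENNReal.ofReal (1 / (2 * Real.sqrt (2 * |z|))) := by
  have hπ := Real.pi_pos
  have hG : Measurable fun q : (ℝ × ℝ × ℝ) × ℝ => ENNReal.ofReal ((4 * π * q.2) ^ (-(2:ℝ)) *
      Real.exp (-((f1 q.1.1 + f2 q.1.2.1 + f3 q.1.2.2) / (4 * q.2)) + z * q.2)) :=
    ENNReal.measurable_ofReal.comp (K4meas_aux z f1 f2 f3 hm1 hm2 hm3)
  have hstep : ∀ s : ℝ, 0 < s →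
      (∫⁻ p : ℝ × ℝ × ℝ, ENNReal.ofReal ((4 * π * s) ^ (-(2:ℝ)) *
        Real.exp (-((f1 p.1 + f2 p.2.1 + f3 p.2.2) / (4 * s)) + z * s))) ≤
      ENNReal.ofReal ((4 * π * s) ^ (-(2:ℝ)) * Real.exp (z * s) *
        (4 * π * s * Real.sqrt (2 * π * s))) := by
    intro s hs
    have hA : (0:ℝ) ≤ (4 * π * s) ^ (-(2:ℝ)) * Real.exp (z * s) :=
      mul_nonneg (Real.rpow_nonneg (by positivity) _) (Real.exp_pos _).le
    set E1 : ℝ → ℝ≥0∞ := fun u => ENNReal.ofReal (Real.exp (-(f1 u / (4 * s)))) with hE1def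
    set E2 : ℝ → ℝ≥0∞ := fun u => ENNReal.ofReal (Real.exp (-(f2 u / (4 * s)))) with hE2def
    set E3 : ℝ → ℝ≥0∞ := fun u => ENNReal.ofReal (Real.exp (-(f3 u / (4 * s)))) with hE3def
    have hE1m : Measurable E1 :=
      ENNReal.measurable_ofReal.comp (Real.measurable_exp.comp (hm1.div_const _).neg)
    have hE2m : Measurable E2 :=
      ENNReal.measurable_ofReal.comp (Real.measurable_exp.comp (hm2.div_const _).neg)
    have hE3m : Measurable E3 :=
      ENNReal.measurable_ofReal.comp (Real.measurable_exp.comp (hm3.div_const _).neg)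
    have hgm : Measurable (fun q : ℝ × ℝ => E2 q.1 * E3 q.2) :=
      (hE2m.comp measurable_fst).mul (hE3m.comp measurable_snd)
    have hre : ∀ p : ℝ × ℝ × ℝ, ENNReal.ofReal ((4 * π * s) ^ (-(2:ℝ)) *
        Real.exp (-((f1 p.1 + f2 p.2.1 + f3 p.2.2) / (4 * s)) + z * s)) =
        ENNReal.ofReal ((4 * π * s) ^ (-(2:ℝ)) * Real.exp (z * s)) *
          (E1 p.1 * (E2 p.2.1 * E3 p.2.2)) := by
      intro p
      have harg : -((f1 p.1 + f2 p.2.1 + f3 p.2.2) / (4 * s)) + z * s =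
          z * s + (-(f1 p.1 / (4 * s)) + (-(f2 p.2.1 / (4 * s)) + -(f3 p.2.2 / (4 * s)))) := by
        ring
      rw [harg, Real.exp_add, Real.exp_add, Real.exp_add, ← mul_assoc,
        ENNReal.ofReal_mul hA, ENNReal.ofReal_mul (Real.exp_pos _).le,
        ENNReal.ofReal_mul (Real.exp_pos _).le]
    calc (∫⁻ p : ℝ × ℝ × ℝ, ENNReal.ofReal ((4 * π * s) ^ (-(2:ℝ)) *
            Real.exp (-((f1 p.1 + f2 p.2.1 + f3 p.2.2) / (4 * s)) + z * s)))
        = ∫⁻ p : ℝ × ℝ × ℝ, ENNReal.ofReal ((4 * π * s) ^ (-(2:ℝ)) * Real.exp (z * s)) *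
            (E1 p.1 * (E2 p.2.1 * E3 p.2.2)) := lintegral_congr hre
      _ = ENNReal.ofReal ((4 * π * s) ^ (-(2:ℝ)) * Real.exp (z * s)) *
            ∫⁻ p : ℝ × ℝ × ℝ, E1 p.1 * (E2 p.2.1 * E3 p.2.2) :=
          lintegral_const_mul' _ _ ENNReal.ofReal_ne_top
      _ = ENNReal.ofReal ((4 * π * s) ^ (-(2:ℝ)) * Real.exp (z * s)) *
            ((∫⁻ u, E1 u) * ∫⁻ q : ℝ × ℝ, E2 q.1 * E3 q.2) := by
          rw [MeasureTheory.Measure.volume_eq_prod,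
            lintegral_prod_mul (f := E1) (g := fun q : ℝ × ℝ => E2 q.1 * E3 q.2)
              hE1m.aemeasurable hgm.aemeasurable]
      _ = ENNReal.ofReal ((4 * π * s) ^ (-(2:ℝ)) * Real.exp (z * s)) *
            ((∫⁻ u, E1 u) * ((∫⁻ u, E2 u) * ∫⁻ u, E3 u)) := by
          rw [MeasureTheory.Measure.volume_eq_prod,
            lintegral_prod_mul (f := E2) (g := E3) hE2m.aemeasurable hE3m.aemeasurable]
      _ ≤ ENNReal.ofReal ((4 * π * s) ^ (-(2:ℝ)) * Real.exp (z * s)) *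
            (ENNReal.ofReal (b1 s) * (ENNReal.ofReal (b2 s) * ENNReal.ofReal (b3 s))) := by
          gcongr
          · exact hb1 s hs
          · exact hb2 s hs
          · exact hb3 s hs
      _ = ENNReal.ofReal ((4 * π * s) ^ (-(2:ℝ)) * Real.exp (z * s)) *
            ENNReal.ofReal (b1 s * (b2 s * b3 s)) := by
          rw [← ENNReal.ofReal_mul (hbn s hs).2.1, ← ENNReal.ofReal_mul (hbn s hs).1]
      _ ≤ ENNReal.ofReal ((4 * π * s) ^ (-(2:ℝ)) * Real.exp (z * s)) *
            ENNReal.ofReal (4 * π * s * Real.sqrt (2 * π * s)) := by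
          exact mul_le_mul_right (ENNReal.ofReal_le_ofReal (hprod s hs)) _
      _ = ENNReal.ofReal ((4 * π * s) ^ (-(2:ℝ)) * Real.exp (z * s) *
            (4 * π * s * Real.sqrt (2 * π * s))) := (ENNReal.ofReal_mul hA).symm
  calc (∫⁻ p : ℝ × ℝ × ℝ, ENNReal.ofReal (∫ s in Set.Ioi (0:ℝ), (4 * π * s) ^ (-(2:ℝ)) *
          Real.exp (-((f1 p.1 + f2 p.2.1 + f3 p.2.2) / (4 * s)) + z * s)))
      ≤ ∫⁻ p : ℝ × ℝ × ℝ, ∫⁻ s in Set.Ioi (0:ℝ), ENNReal.ofReal ((4 * π * s) ^ (-(2:ℝ)) *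
          Real.exp (-((f1 p.1 + f2 p.2.1 + f3 p.2.2) / (4 * s)) + z * s)) := by
        refine lintegral_mono fun p => ?_
        refine my_ofReal_integral_le _ _ ?_
        filter_upwards [ae_restrict_mem measurableSet_Ioi] with s hs
        have hs' : (0:ℝ) < s := hs
        exact mul_nonneg (Real.rpow_nonneg (by positivity) _) (Real.exp_pos _).le
    _ = ∫⁻ s in Set.Ioi (0:ℝ), ∫⁻ p : ℝ × ℝ × ℝ, ENNReal.ofReal ((4 * π * s) ^ (-(2:ℝ)) *
          Real.exp (-((f1 p.1 + f2 p.2.1 + f3 p.2.2) / (4 * s)) + z * s)) :=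
        lintegral_lintegral_swap hG.aemeasurable
    _ ≤ ∫⁻ s in Set.Ioi (0:ℝ), ENNReal.ofReal ((4 * π * s) ^ (-(2:ℝ)) * Real.exp (z * s) *
          (4 * π * s * Real.sqrt (2 * π * s))) := by
        refine lintegral_mono_ae ?_
        filter_upwards [ae_restrict_mem measurableSet_Ioi] with s hs
        exact hstep s hs
    _ = ∫⁻ s in Set.Ioi (0:ℝ), ENNReal.ofReal (Real.sqrt (2 * π) / (4 * π)) *
          ENNReal.ofReal (Real.exp (-(-z * s)) / Real.sqrt s) := by
        refine setLIntegral_congr_fun measurableSet_Ioi (fun s hs => ?_)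
        rw [← ENNReal.ofReal_mul (by positivity), time_pt z s hs]
    _ = ENNReal.ofReal (Real.sqrt (2 * π) / (4 * π)) *
          ∫⁻ s in Set.Ioi (0:ℝ), ENNReal.ofReal (Real.exp (-(-z * s)) / Real.sqrt s) :=
        lintegral_const_mul' _ _ ENNReal.ofReal_ne_top
    _ = ENNReal.ofReal (Real.sqrt (2 * π) / (4 * π)) * ENNReal.ofReal (Real.sqrt (π / (-z))) := by
        rw [lint_time (-z) (by linarith)]
    _ = ENNReal.ofReal (1 / (2 * Real.sqrt (2 * |z|))) := by
        rw [← ENNReal.ofReal_mul (by positivity), const_eq z hz]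

lemma K4_nonneg (z x y w x' y' w' : ℝ) : 0 ≤ K4 z x y w x' y' w' :=
  setIntegral_nonneg measurableSet_Ioi fun t ht => by
    have ht' : (0:ℝ) < t := ht
    exact mul_nonneg (Real.rpow_nonneg (by positivity) _) (Real.exp_pos _).le

lemma K4_measurable (z : ℝ) :
    Measurable fun v : (ℝ × ℝ × ℝ) × (ℝ × ℝ × ℝ) =>
      K4 z v.1.1 v.1.2.1 v.1.2.2 v.2.1 v.2.2.1 v.2.2.2 := by
  have hint : StronglyMeasurable fun q : ((ℝ × ℝ × ℝ) × (ℝ × ℝ × ℝ)) × ℝ =>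
      (4 * π * q.2) ^ (-(2:ℝ)) * Real.exp (-(((q.1.1.1 - q.1.2.1) ^ 2 +
        (q.1.1.2.1 - q.1.2.1) ^ 2 + (q.1.1.2.2 - q.1.2.2.1) ^ 2 +
        (q.1.1.2.2 - q.1.2.2.2) ^ 2) / (4 * q.2)) + z * q.2) := by
    apply Measurable.stronglyMeasurable
    have m_x : Measurable fun q : ((ℝ × ℝ × ℝ) × (ℝ × ℝ × ℝ)) × ℝ => q.1.1.1 :=
      measurable_fst.fst.fst
    have m_y : Measurable fun q : ((ℝ × ℝ × ℝ) × (ℝ × ℝ × ℝ)) × ℝ => q.1.1.2.1 :=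
      measurable_fst.fst.snd.fst
    have m_w : Measurable fun q : ((ℝ × ℝ × ℝ) × (ℝ × ℝ × ℝ)) × ℝ => q.1.1.2.2 :=
      measurable_fst.fst.snd.snd
    have m_x' : Measurable fun q : ((ℝ × ℝ × ℝ) × (ℝ × ℝ × ℝ)) × ℝ => q.1.2.1 :=
      measurable_fst.snd.fst
    have m_y' : Measurable fun q : ((ℝ × ℝ × ℝ) × (ℝ × ℝ × ℝ)) × ℝ => q.1.2.2.1 :=
      measurable_fst.snd.snd.fst
    have m_w' : Measurable fun q : ((ℝ × ℝ × ℝ) × (ℝ × ℝ × ℝ)) × ℝ => q.1.2.2.2 :=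
      measurable_fst.snd.snd.snd
    have hQ : Measurable fun q : ((ℝ × ℝ × ℝ) × (ℝ × ℝ × ℝ)) × ℝ =>
        (q.1.1.1 - q.1.2.1) ^ 2 + (q.1.1.2.1 - q.1.2.1) ^ 2 +
        (q.1.1.2.2 - q.1.2.2.1) ^ 2 + (q.1.1.2.2 - q.1.2.2.2) ^ 2 :=
      ((((m_x.sub m_x').pow_const 2).add ((m_y.sub m_x').pow_const 2)).add
        ((m_w.sub m_y').pow_const 2)).add ((m_w.sub m_w').pow_const 2)
    have harg : Measurable fun q : ((ℝ × ℝ × ℝ) × (ℝ × ℝ × ℝ)) × ℝ =>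
        -(((q.1.1.1 - q.1.2.1) ^ 2 + (q.1.1.2.1 - q.1.2.1) ^ 2 +
          (q.1.1.2.2 - q.1.2.2.1) ^ 2 + (q.1.1.2.2 - q.1.2.2.2) ^ 2) / (4 * q.2)) + z * q.2 :=
      ((hQ.div (measurable_snd.const_mul 4)).neg).add (measurable_snd.const_mul z)
    exact ((measurable_snd.const_mul (4 * π)).pow measurable_const).mul
      (Real.measurable_exp.comp harg)
  unfold K4
  exact hint.integral_prod_right'.measurable

lemma K4_row (z : ℝ) (hz : z < 0) (x y w : ℝ) :
    (∫⁻ p : ℝ × ℝ × ℝ, ENNReal.ofReal (K4 z x y w p.1 p.2.1 p.2.2)) ≤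
      ENNReal.ofReal (1 / (2 * Real.sqrt (2 * |z|))) := by
  simp only [K4]
  have hsqrt : ∀ t : ℝ, 0 < t → Real.sqrt (4 * π * t) * Real.sqrt (4 * π * t) = 4 * π * t :=
    fun t ht => Real.mul_self_sqrt (by positivity)
  refine key z hz (fun u => (x - u) ^ 2 + (y - u) ^ 2) (fun u => (w - u) ^ 2)
    (fun u => (w - u) ^ 2)
    (((measurable_const.sub measurable_id).pow_const 2).add
      ((measurable_const.sub measurable_id).pow_const 2))
    ((measurable_const.sub measurable_id).pow_const 2)
    ((measurable_const.sub measurable_id).pow_const 2)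
    (fun t => Real.sqrt (2 * π * t)) (fun t => Real.sqrt (4 * π * t))
    (fun t => Real.sqrt (4 * π * t))
    (fun t ht => gauss_two x y t ht)
    (fun t ht => (gauss_one w t ht).le)
    (fun t ht => (gauss_one w t ht).le)
    (fun t ht => ⟨Real.sqrt_nonneg _, Real.sqrt_nonneg _, Real.sqrt_nonneg _⟩)
    (fun t ht => le_of_eq (by rw [hsqrt t ht]; ring))

lemma K4_col (z : ℝ) (hz : z < 0) (x' y' w' : ℝ) :
    (∫⁻ q : ℝ × ℝ × ℝ, ENNReal.ofReal (K4 z q.1 q.2.1 q.2.2 x' y' w')) ≤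
      ENNReal.ofReal (1 / (2 * Real.sqrt (2 * |z|))) := by
  have hKe : ∀ q : ℝ × ℝ × ℝ, K4 z q.1 q.2.1 q.2.2 x' y' w' =
      ∫ s in Set.Ioi (0:ℝ), (4 * π * s) ^ (-(2:ℝ)) *
        Real.exp (-(((x' - q.1) ^ 2 + (x' - q.2.1) ^ 2 +
          ((y' - q.2.2) ^ 2 + (w' - q.2.2) ^ 2)) / (4 * s)) + z * s) := by
    intro q
    unfold K4
    refine setIntegral_congr_fun measurableSet_Ioi fun t _ => ?_
    ring_nf
  simp_rw [hKe]
  have hsqrt : ∀ t : ℝ, 0 < t → Real.sqrt (4 * π * t) * Real.sqrt (4 * π * t) = 4 * π * t :=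
    fun t ht => Real.mul_self_sqrt (by positivity)
  refine key z hz (fun u => (x' - u) ^ 2) (fun u => (x' - u) ^ 2)
    (fun u => (y' - u) ^ 2 + (w' - u) ^ 2)
    ((measurable_const.sub measurable_id).pow_const 2)
    ((measurable_const.sub measurable_id).pow_const 2)
    (((measurable_const.sub measurable_id).pow_const 2).add
      ((measurable_const.sub measurable_id).pow_const 2))
    (fun t => Real.sqrt (4 * π * t)) (fun t => Real.sqrt (4 * π * t))
    (fun t => Real.sqrt (2 * π * t))
    (fun t ht => (gauss_one x' t ht).le)
    (fun t ht => (gauss_one x' t ht).le)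
    (fun t ht => gauss_two y' w' t ht)
    (fun t ht => ⟨Real.sqrt_nonneg _, Real.sqrt_nonneg _, Real.sqrt_nonneg _⟩)
    (fun t ht => le_of_eq (by rw [← mul_assoc, hsqrt t ht]))

end SchurAux

set_option maxHeartbeats 1000000

/-- Schur bound for the 4-dimensional Green function kernel: for `z < 0`,
`sup ∫ K dx'dy'dw' ≤ 1/(2√(2|z|))`, hence the induced integral operator
`B : L²(ℝ³) → L²(ℝ³)` is bounded with `‖B‖ ≤ (2√(2|z|))⁻¹`. -/
theorem stmt_14 (z : ℝ) (hz : z < 0) :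
    (∀ x y w : ℝ, (∫ p : ℝ × ℝ × ℝ, K4 z x y w p.1 p.2.1 p.2.2) ≤
      1 / (2 * Real.sqrt (2 * |z|))) ∧
    ∀ f : ℝ × ℝ × ℝ → ℝ, AEStronglyMeasurable f (volume : Measure (ℝ × ℝ × ℝ)) →
      eLpNorm (fun q : ℝ × ℝ × ℝ => ∫ p : ℝ × ℝ × ℝ, K4 z q.1 q.2.1 q.2.2 p.1 p.2.1 p.2.2 * f p)
          2 (volume : Measure (ℝ × ℝ × ℝ)) ≤
        ENNReal.ofReal (1 / (2 * Real.sqrt (2 * |z|))) *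
          eLpNorm f 2 (volume : Measure (ℝ × ℝ × ℝ)) := by
  have hC : (0:ℝ) ≤ 1 / (2 * Real.sqrt (2 * |z|)) := by positivity
  have hKm := K4_measurable z
  constructor
  · intro x y w
    exact my_integral_le_of_lintegral hC (fun p => K4_nonneg z x y w p.1 p.2.1 p.2.2)
      (K4_row z hz x y w)
  · intro f hf
    set Cns := ENNReal.ofReal (1 / (2 * Real.sqrt (2 * |z|))) with hCdef
    have hKem : Measurable fun v : (ℝ × ℝ × ℝ) × (ℝ × ℝ × ℝ) =>
        ENNReal.ofReal (K4 z v.1.1 v.1.2.1 v.1.2.2 v.2.1 v.2.2.1 v.2.2.2) :=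
      ENNReal.measurable_ofReal.comp hKm
    have hrow : ∀ q : ℝ × ℝ × ℝ,
        (∫⁻ p : ℝ × ℝ × ℝ, ENNReal.ofReal (K4 z q.1 q.2.1 q.2.2 p.1 p.2.1 p.2.2)) ≤ Cns :=
      fun q => K4_row z hz q.1 q.2.1 q.2.2
    have hcol : ∀ p : ℝ × ℝ × ℝ,
        (∫⁻ q : ℝ × ℝ × ℝ, ENNReal.ofReal (K4 z q.1 q.2.1 q.2.2 p.1 p.2.1 p.2.2)) ≤ Cns :=
      fun p => K4_col z hz p.1 p.2.1 p.2.2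
    have hnf : AEMeasurable (fun p : ℝ × ℝ × ℝ => (‖f p‖₊ : ℝ≥0∞)) volume := hf.enorm
    rw [eLpNorm_eq_lintegral_rpow_enorm_toReal (by norm_num) (by norm_num),
      eLpNorm_eq_lintegral_rpow_enorm_toReal (by norm_num) (by norm_num)]
    simp only [ENNReal.toReal_ofNat, enorm_eq_nnnorm]
    have hpt : ∀ q : ℝ × ℝ × ℝ,
        (‖∫ p : ℝ × ℝ × ℝ, K4 z q.1 q.2.1 q.2.2 p.1 p.2.1 p.2.2 * f p‖₊ : ℝ≥0∞) ^ (2:ℝ) ≤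
        Cns * ∫⁻ p : ℝ × ℝ × ℝ,
          ENNReal.ofReal (K4 z q.1 q.2.1 q.2.2 p.1 p.2.1 p.2.2) * (‖f p‖₊ : ℝ≥0∞) ^ (2:ℝ) := by
      intro q
      have hKqm : AEMeasurable
          (fun p : ℝ × ℝ × ℝ => ENNReal.ofReal (K4 z q.1 q.2.1 q.2.2 p.1 p.2.1 p.2.2)) volume :=
        (hKem.comp (measurable_prodMk_left (x := q))).aemeasurable
      have h1 : (‖∫ p : ℝ × ℝ × ℝ, K4 z q.1 q.2.1 q.2.2 p.1 p.2.1 p.2.2 * f p‖₊ : ℝ≥0∞) ≤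
          ∫⁻ p : ℝ × ℝ × ℝ,
            ENNReal.ofReal (K4 z q.1 q.2.1 q.2.2 p.1 p.2.1 p.2.2) * (‖f p‖₊ : ℝ≥0∞) := by
        refine le_trans (enorm_integral_le_lintegral_enorm _) (lintegral_mono fun p => ?_)
        rw [enorm_mul,
          Real.enorm_eq_ofReal (K4_nonneg z q.1 q.2.1 q.2.2 p.1 p.2.1 p.2.2), enorm_eq_nnnorm]
      have h2 : (∫⁻ p : ℝ × ℝ × ℝ,
            ENNReal.ofReal (K4 z q.1 q.2.1 q.2.2 p.1 p.2.1 p.2.2) * (‖f p‖₊ : ℝ≥0∞)) ≤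
          (∫⁻ p : ℝ × ℝ × ℝ, ENNReal.ofReal (K4 z q.1 q.2.1 q.2.2 p.1 p.2.1 p.2.2)) ^ ((1:ℝ)/2) *
          (∫⁻ p : ℝ × ℝ × ℝ, ENNReal.ofReal (K4 z q.1 q.2.1 q.2.2 p.1 p.2.1 p.2.2) *
            (‖f p‖₊ : ℝ≥0∞) ^ (2:ℝ)) ^ ((1:ℝ)/2) := by
        have hconj : Real.HolderConjugate 2 2 := Real.HolderConjugate.two_two
        have hφ : AEMeasurable (fun p : ℝ × ℝ × ℝ =>
            (ENNReal.ofReal (K4 z q.1 q.2.1 q.2.2 p.1 p.2.1 p.2.2)) ^ ((1:ℝ)/2)) volume :=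
          hKqm.pow_const _
        have hψ : AEMeasurable (fun p : ℝ × ℝ × ℝ =>
            (ENNReal.ofReal (K4 z q.1 q.2.1 q.2.2 p.1 p.2.1 p.2.2)) ^ ((1:ℝ)/2) *
              (‖f p‖₊ : ℝ≥0∞)) volume := hφ.mul hnf
        have hH := ENNReal.lintegral_mul_le_Lp_mul_Lq volume hconj hφ hψ
        have e1 : (∫⁻ p : ℝ × ℝ × ℝ,
            ((fun p : ℝ × ℝ × ℝ =>
              (ENNReal.ofReal (K4 z q.1 q.2.1 q.2.2 p.1 p.2.1 p.2.2)) ^ ((1:ℝ)/2)) *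
             (fun p : ℝ × ℝ × ℝ =>
              (ENNReal.ofReal (K4 z q.1 q.2.1 q.2.2 p.1 p.2.1 p.2.2)) ^ ((1:ℝ)/2) *
                (‖f p‖₊ : ℝ≥0∞))) p) =
            ∫⁻ p : ℝ × ℝ × ℝ,
              ENNReal.ofReal (K4 z q.1 q.2.1 q.2.2 p.1 p.2.1 p.2.2) * (‖f p‖₊ : ℝ≥0∞) := by
          refine lintegral_congr fun p => ?_
          simp only [Pi.mul_apply]
          rw [← mul_assoc, ← ENNReal.rpow_add_of_nonneg _ _ (by norm_num) (by norm_num)]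
          norm_num
        have e2 : (∫⁻ p : ℝ × ℝ × ℝ,
            ((ENNReal.ofReal (K4 z q.1 q.2.1 q.2.2 p.1 p.2.1 p.2.2)) ^ ((1:ℝ)/2)) ^ (2:ℝ)) =
            ∫⁻ p : ℝ × ℝ × ℝ, ENNReal.ofReal (K4 z q.1 q.2.1 q.2.2 p.1 p.2.1 p.2.2) := by
          refine lintegral_congr fun p => ?_
          rw [← ENNReal.rpow_mul]
          norm_num
        have e3 : (∫⁻ p : ℝ × ℝ × ℝ,
            ((ENNReal.ofReal (K4 z q.1 q.2.1 q.2.2 p.1 p.2.1 p.2.2)) ^ ((1:ℝ)/2) *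
              (‖f p‖₊ : ℝ≥0∞)) ^ (2:ℝ)) =
            ∫⁻ p : ℝ × ℝ × ℝ, ENNReal.ofReal (K4 z q.1 q.2.1 q.2.2 p.1 p.2.1 p.2.2) *
              (‖f p‖₊ : ℝ≥0∞) ^ (2:ℝ) := by
          refine lintegral_congr fun p => ?_
          rw [ENNReal.mul_rpow_of_nonneg _ _ (by norm_num), ← ENNReal.rpow_mul]
          norm_num
        rw [e1, e2, e3] at hH
        exact hH
      calc (‖∫ p : ℝ × ℝ × ℝ, K4 z q.1 q.2.1 q.2.2 p.1 p.2.1 p.2.2 * f p‖₊ : ℝ≥0∞) ^ (2:ℝ)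
          ≤ ((∫⁻ p : ℝ × ℝ × ℝ,
                ENNReal.ofReal (K4 z q.1 q.2.1 q.2.2 p.1 p.2.1 p.2.2)) ^ ((1:ℝ)/2) *
              (∫⁻ p : ℝ × ℝ × ℝ, ENNReal.ofReal (K4 z q.1 q.2.1 q.2.2 p.1 p.2.1 p.2.2) *
                (‖f p‖₊ : ℝ≥0∞) ^ (2:ℝ)) ^ ((1:ℝ)/2)) ^ (2:ℝ) :=
            ENNReal.rpow_le_rpow (le_trans h1 h2) (by norm_num)
        _ = (∫⁻ p : ℝ × ℝ × ℝ, ENNReal.ofReal (K4 z q.1 q.2.1 q.2.2 p.1 p.2.1 p.2.2)) *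
              ∫⁻ p : ℝ × ℝ × ℝ, ENNReal.ofReal (K4 z q.1 q.2.1 q.2.2 p.1 p.2.1 p.2.2) *
                (‖f p‖₊ : ℝ≥0∞) ^ (2:ℝ) := by
            rw [ENNReal.mul_rpow_of_nonneg _ _ (by norm_num), ← ENNReal.rpow_mul,
              ← ENNReal.rpow_mul]
            norm_num
        _ ≤ Cns * ∫⁻ p : ℝ × ℝ × ℝ, ENNReal.ofReal (K4 z q.1 q.2.1 q.2.2 p.1 p.2.1 p.2.2) *
              (‖f p‖₊ : ℝ≥0∞) ^ (2:ℝ) := mul_le_mul_left (hrow q) _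
    have hnf2top : ∀ p : ℝ × ℝ × ℝ, ((‖f p‖₊ : ℝ≥0∞)) ^ (2:ℝ) ≠ ∞ :=
      fun p => ENNReal.rpow_ne_top_of_nonneg (by norm_num) ENNReal.coe_ne_top
    have hjoint : AEMeasurable (Function.uncurry fun q p : ℝ × ℝ × ℝ =>
        ENNReal.ofReal (K4 z q.1 q.2.1 q.2.2 p.1 p.2.1 p.2.2) * (‖f p‖₊ : ℝ≥0∞) ^ (2:ℝ))
        ((volume : Measure (ℝ × ℝ × ℝ)).prod (volume : Measure (ℝ × ℝ × ℝ))) :=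
      hKem.aemeasurable.mul ((hf.comp_snd.enorm).pow_const (2:ℝ))
    have hmain : (∫⁻ q : ℝ × ℝ × ℝ,
        (‖∫ p : ℝ × ℝ × ℝ, K4 z q.1 q.2.1 q.2.2 p.1 p.2.1 p.2.2 * f p‖₊ : ℝ≥0∞) ^ (2:ℝ)) ≤
        Cns ^ (2:ℝ) * ∫⁻ p : ℝ × ℝ × ℝ, (‖f p‖₊ : ℝ≥0∞) ^ (2:ℝ) := by
      calc (∫⁻ q : ℝ × ℝ × ℝ,
          (‖∫ p : ℝ × ℝ × ℝ, K4 z q.1 q.2.1 q.2.2 p.1 p.2.1 p.2.2 * f p‖₊ : ℝ≥0∞) ^ (2:ℝ))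
          ≤ ∫⁻ q : ℝ × ℝ × ℝ, Cns * ∫⁻ p : ℝ × ℝ × ℝ,
              ENNReal.ofReal (K4 z q.1 q.2.1 q.2.2 p.1 p.2.1 p.2.2) * (‖f p‖₊ : ℝ≥0∞) ^ (2:ℝ) :=
            lintegral_mono hpt
        _ = Cns * ∫⁻ q : ℝ × ℝ × ℝ, ∫⁻ p : ℝ × ℝ × ℝ,
              ENNReal.ofReal (K4 z q.1 q.2.1 q.2.2 p.1 p.2.1 p.2.2) * (‖f p‖₊ : ℝ≥0∞) ^ (2:ℝ) :=
            lintegral_const_mul' _ _ ENNReal.ofReal_ne_top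
        _ = Cns * ∫⁻ p : ℝ × ℝ × ℝ, ∫⁻ q : ℝ × ℝ × ℝ,
              ENNReal.ofReal (K4 z q.1 q.2.1 q.2.2 p.1 p.2.1 p.2.2) * (‖f p‖₊ : ℝ≥0∞) ^ (2:ℝ) := by
            rw [lintegral_lintegral_swap hjoint]
        _ = Cns * ∫⁻ p : ℝ × ℝ × ℝ,
              (∫⁻ q : ℝ × ℝ × ℝ, ENNReal.ofReal (K4 z q.1 q.2.1 q.2.2 p.1 p.2.1 p.2.2)) *
                (‖f p‖₊ : ℝ≥0∞) ^ (2:ℝ) := by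
            congr 1
            refine lintegral_congr fun p => ?_
            rw [lintegral_mul_const' _ _ (hnf2top p)]
        _ ≤ Cns * ∫⁻ p : ℝ × ℝ × ℝ, Cns * (‖f p‖₊ : ℝ≥0∞) ^ (2:ℝ) :=
            mul_le_mul_right (lintegral_mono fun p => mul_le_mul_left (hcol p) _) _
        _ = Cns * (Cns * ∫⁻ p : ℝ × ℝ × ℝ, (‖f p‖₊ : ℝ≥0∞) ^ (2:ℝ)) := by
            rw [lintegral_const_mul' _ _ ENNReal.ofReal_ne_top]
        _ = Cns ^ (2:ℝ) * ∫⁻ p : ℝ × ℝ × ℝ, (‖f p‖₊ : ℝ≥0∞) ^ (2:ℝ) := by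
            rw [show (2:ℝ) = ((2:ℕ):ℝ) by norm_num, ENNReal.rpow_natCast, pow_two, mul_assoc]
    refine le_trans (ENNReal.rpow_le_rpow hmain (by norm_num)) (le_of_eq ?_)
    rw [ENNReal.mul_rpow_of_nonneg _ _ (by norm_num), ← ENNReal.rpow_mul]
    norm_num
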